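/- Every graph with n vertices and m edges contains at least (4m/(3n))·(m − n²/4) triangles (Goodman's bound). -/

import Mathlib

open Finset

theorem goodman_bound {V : Type*} [Fintype V] [DecidableEq V]
    (G : SimpleGraph V) [DecidableRel G.Adj] :
    4 * (G.edgeFinset.card : ℝ) / (3 * Fintype.card V) *
        ((G.edgeFinset.card : ℝ) - (Fintype.card V : ℝ) ^ 2 / 4)
      ≤ ((G.cliqueFinset 3).card : ℝ) := by
  classical
  set n := Fintype.card V with hn
  set m := G.edgeFinset.card with hm
  set T := (G.cliqueFinset 3).card with hT
  set S : Finset (V × V × V) :=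
    univ.filter (fun p => G.Adj p.1 p.2.1 ∧ G.Adj p.1 p.2.2 ∧ G.Adj p.2.1 p.2.2) with hS
  set D : Finset (V × V) := univ.filter (fun p => G.Adj p.1 p.2) with hD
  -- Step 1 : #S ≤ 6 * T
  have hS6 : S.card ≤ 6 * T := by
    apply card_le_mul_card_image_of_maps_to
      (f := fun p : V × V × V => ({p.1, p.2.1, p.2.2} : Finset V)) (t := G.cliqueFinset 3)
    · intro p hp
      simp only [hS, mem_filter, mem_univ, true_and] at hp
      rw [SimpleGraph.mem_cliqueFinset_iff]
      exact SimpleGraph.is3Clique_triple_iff.2 ⟨hp.1, hp.2.1, hp.2.2⟩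
    · intro t ht
      rw [SimpleGraph.mem_cliqueFinset_iff, SimpleGraph.is3Clique_iff] at ht
      obtain ⟨x, y, z, hxy, hxz, hyz, rfl⟩ := ht
      have hsub : {p ∈ S | ({p.1, p.2.1, p.2.2} : Finset V) = {x, y, z}} ⊆
          ({(x,y,z),(x,z,y),(y,x,z),(y,z,x),(z,x,y),(z,y,x)} : Finset (V × V × V)) := by
        rintro ⟨a, b, c⟩ hp
        simp only [hS, mem_filter, mem_univ, true_and] at hp
        obtain ⟨⟨h12, h13, h23⟩, heq⟩ := hp
        have ha : a ∈ ({x, y, z} : Finset V) := heq ▸ (by simp)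
        have hb : b ∈ ({x, y, z} : Finset V) := heq ▸ (by simp)
        have hc : c ∈ ({x, y, z} : Finset V) := heq ▸ (by simp)
        have n12 := h12.ne; have n13 := h13.ne; have n23 := h23.ne
        simp only [mem_insert, mem_singleton] at ha hb hc ⊢
        rcases ha with rfl | rfl | rfl <;> rcases hb with rfl | rfl | rfl <;>
          rcases hc with rfl | rfl | rfl <;> simp_all
      refine (card_le_card hsub).trans ?_
      iterate 5 refine (Finset.card_insert_le _ _).trans (Nat.add_le_add_right ?_ 1)
      simp
  -- Step 2 : #S = ∑ over D of codegree
  have hScard : S.card = ∑ p ∈ D, ((G.neighborFinset p.1) ∩ (G.neighborFinset p.2)).card := by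
    rw [card_eq_sum_card_fiberwise (f := fun q : V × V × V => (q.1, q.2.1)) (t := D)
      (fun q hq => by
        simp only [hS, mem_coe, mem_filter, mem_univ, true_and] at hq
        simp [hD, hq.1])]
    refine sum_congr rfl fun p hp => ?_
    apply card_bij (fun q _ => q.2.2)
    · intro q hq
      simp only [hS, mem_filter, mem_univ, true_and] at hq
      obtain ⟨⟨h1, h2, h3⟩, he⟩ := hq
      have e1 : q.1 = p.1 := congrArg Prod.fst he
      have e2 : q.2.1 = p.2 := congrArg Prod.snd he
      simp only [mem_inter, SimpleGraph.mem_neighborFinset]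
      exact ⟨e1 ▸ h2, e2 ▸ h3⟩
    · rintro ⟨a1, a2, a3⟩ ha ⟨b1, b2, b3⟩ hb hab
      simp only [hS, mem_filter, mem_univ, true_and, Prod.mk.injEq] at ha hb
      obtain ⟨-, ha1, ha2⟩ := ha
      obtain ⟨-, hb1, hb2⟩ := hb
      simp_all [Prod.ext_iff]
    · intro w hw
      simp only [mem_inter, SimpleGraph.mem_neighborFinset] at hw
      simp only [hD, mem_filter, mem_univ, true_and] at hp
      exact ⟨(p.1, p.2, w), by simp [hS, hp, hw.1, hw.2], rfl⟩
  -- helper : sums over D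
  have key : ∀ g : V → V → ℕ, ∑ p ∈ D, g p.1 p.2 = ∑ u, ∑ v ∈ G.neighborFinset u, g u v := by
    intro g
    rw [hD, sum_filter, Fintype.sum_prod_type]
    refine sum_congr rfl fun u _ => ?_
    rw [SimpleGraph.neighborFinset_eq_filter, sum_filter]
  have hDcard : D.card = 2 * m := by
    have h := key (fun _ _ => 1)
    simp only [sum_const, smul_eq_mul, mul_one,
      SimpleGraph.card_neighborFinset_eq_degree] at h
    rw [h, hm]
    exact G.sum_degrees_eq_twice_card_edges
  -- Step 3 : degree sums
  have hfst : ∑ p ∈ D, G.degree p.1 = ∑ u, G.degree u ^ 2 := by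
    rw [key (fun u _ => G.degree u)]
    refine sum_congr rfl fun u _ => ?_
    simp [SimpleGraph.card_neighborFinset_eq_degree, sq]
  have hswap : ∑ p ∈ D, G.degree p.2 = ∑ p ∈ D, G.degree p.1 := by
    refine sum_nbij' (fun p => Prod.swap p) (fun p => Prod.swap p) ?_ ?_ ?_ ?_ ?_
    · intro p hp; simp only [hD, mem_filter, mem_univ, true_and] at hp ⊢
      exact hp.symm
    · intro p hp; simp only [hD, mem_filter, mem_univ, true_and] at hp ⊢
      exact hp.symm
    · intro p _; simp
    · intro p _; simp
    · intro p _; rfl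
  -- Step 4 : codegree lower bound summed
  have hcodeg : ∀ p ∈ D, G.degree p.1 + G.degree p.2 ≤
      n + ((G.neighborFinset p.1) ∩ (G.neighborFinset p.2)).card := by
    intro p _
    have h1 := card_union_add_card_inter (G.neighborFinset p.1) (G.neighborFinset p.2)
    have h2 : (G.neighborFinset p.1 ∪ G.neighborFinset p.2).card ≤ n := by
      rw [hn, ← card_univ]; exact card_le_card (subset_univ _)
    have d1 : (G.neighborFinset p.1).card = G.degree p.1 := rfl
    have d2 : (G.neighborFinset p.2).card = G.degree p.2 := rfl
    omega
  have hsum : 2 * ∑ u, G.degree u ^ 2 ≤ n * (2 * m) + S.card := by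
    calc 2 * ∑ u, G.degree u ^ 2 = ∑ p ∈ D, (G.degree p.1 + G.degree p.2) := by
          rw [sum_add_distrib, hfst, hswap, hfst]; ring
      _ ≤ ∑ p ∈ D, (n + ((G.neighborFinset p.1) ∩ (G.neighborFinset p.2)).card) :=
          sum_le_sum hcodeg
      _ = n * D.card + S.card := by
          rw [sum_add_distrib, sum_const, smul_eq_mul, ← hScard, mul_comm]
      _ = n * (2 * m) + S.card := by rw [hDcard]
  -- Step 5 : Cauchy-Schwarz
  have hdegsum : ∑ u, G.degree u = 2 * m := G.sum_degrees_eq_twice_card_edges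
  have hCS : ((2 * m : ℕ) : ℝ) ^ 2 ≤ (n : ℝ) * ∑ u, (G.degree u : ℝ) ^ 2 := by
    have := sq_sum_le_card_mul_sum_sq (s := (univ : Finset V)) (f := fun u => (G.degree u : ℝ))
    have e : ∑ u, (G.degree u : ℝ) = ((2 * m : ℕ) : ℝ) := by
      rw [← hdegsum]; push_cast; rfl
    rw [e] at this
    simpa [hn, card_univ] using this
  -- Final : combine over ℝ
  have hQ : (2 : ℝ) * ∑ u, (G.degree u : ℝ) ^ 2 ≤ (n : ℝ) * (2 * m) + 6 * T := by
    have h1 : (2 * ∑ u, G.degree u ^ 2 : ℕ) ≤ n * (2 * m) + 6 * T := hsum.trans (by omega)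
    have := (Nat.cast_le (α := ℝ)).2 h1
    push_cast at this ⊢
    linarith
  rcases eq_or_lt_of_le (Nat.zero_le n) with hn0 | hn0
  · have hV : (univ : Finset V) = ∅ := by
      rw [← Finset.card_eq_zero, card_univ, ← hn, ← hn0]
    have hm0 : m = 0 := by
      have h2 : 2 * m = 0 := by rw [← hdegsum, hV, sum_empty]
      omega
    simp [hm0]
  · have hN : (0 : ℝ) < n := by exact_mod_cast hn0
    rw [div_mul_eq_mul_div, div_le_iff₀ (by positivity)]
    have hT0 : (0 : ℝ) ≤ T := Nat.cast_nonneg T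
    push_cast at hCS
    nlinarith [mul_le_mul_of_nonneg_left hQ (le_of_lt hN)]
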